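/- Let a, b be real numbers with b > 0 and 1 − a − b ≤ 0. Then the function g(x) = x(x − 1)/(x² − a·x − b) is concave on the open interval (0, 1). -/

import Mathlib

/-- For real `a`, `b` with `b > 0` and `1 - a - b ≤ 0`, the function
`g(x) = x(x-1)/(x² - a x - b)` is concave on `(0, 1)`. -/
theorem mrc_snr_concave (a b : ℝ) (hb : 0 < b) (hab : 1 - a - b ≤ 0) :
    ConcaveOn ℝ (Set.Ioo (0 : ℝ) 1)
      (fun x : ℝ => x * (x - 1) / (x ^ 2 - a * x - b)) := by
  have hq : ∀ x ∈ Set.Ioo (0 : ℝ) 1, x ^ 2 - a * x - b < 0 := by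
    intro x hx
    obtain ⟨hx0, hx1⟩ := hx
    nlinarith [mul_pos hx0 (sub_pos.2 hx1)]
  have hq' : ∀ x ∈ Set.Ioo (0 : ℝ) 1, x ^ 2 - a * x - b ≠ 0 :=
    fun x hx => (hq x hx).ne
  have hint : interior (Set.Ioo (0 : ℝ) 1) = Set.Ioo (0 : ℝ) 1 :=
    interior_Ioo
  refine concaveOn_of_hasDerivWithinAt2_nonpos (f' := fun x =>
      ((1 - a) * x ^ 2 - 2 * b * x + b) / (x ^ 2 - a * x - b) ^ 2)
      (f'' := fun x =>
        (2 * ((a - 1) * x ^ 3 + 3 * b * x ^ 2 - 3 * b * x + b ^ 2 + a * b)) /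
          (x ^ 2 - a * x - b) ^ 3)
      (convex_Ioo 0 1) ?_ ?_ ?_ ?_
  · exact ContinuousOn.div (by fun_prop) (by fun_prop) hq'
  · rw [hint]
    intro x hx
    have h1 : HasDerivAt (fun x : ℝ => x * (x - 1))
        (1 * (x - 1) + x * 1) x := (hasDerivAt_id x).mul ((hasDerivAt_id x).sub_const 1)
    have h2 : HasDerivAt (fun x : ℝ => x ^ 2 - a * x - b)
        (2 * x - a) x := by
      have := ((hasDerivAt_pow 2 x).sub ((hasDerivAt_id x).const_mul a)).sub_const b
      simpa using this
    have := h1.fun_div h2 (hq' x hx)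
    apply HasDerivAt.hasDerivWithinAt
    refine this.congr_deriv ?_
    have hne := hq' x hx
    field_simp
    ring
  · rw [hint]
    intro x hx
    have hne := hq' x hx
    have h1 : HasDerivAt (fun x : ℝ => (1 - a) * x ^ 2 - 2 * b * x + b)
        ((1 - a) * (2 * x) - 2 * b) x := by
      have := (((hasDerivAt_pow 2 x).const_mul (1 - a)).sub
        ((hasDerivAt_id x).const_mul (2 * b))).add_const b
      simpa using this
    have h2 : HasDerivAt (fun x : ℝ => (x ^ 2 - a * x - b) ^ 2)
        (2 * (x ^ 2 - a * x - b) * (2 * x - a)) x := by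
      have hq2 : HasDerivAt (fun x : ℝ => x ^ 2 - a * x - b) (2 * x - a) x := by
        have := ((hasDerivAt_pow 2 x).sub ((hasDerivAt_id x).const_mul a)).sub_const b
        simpa using this
      have := hq2.fun_pow 2
      refine this.congr_deriv ?_
      ring
    have := h1.fun_div h2 (pow_ne_zero 2 hne)
    apply HasDerivAt.hasDerivWithinAt
    refine this.congr_deriv ?_
    field_simp
    ring
  · rw [hint]
    intro x hx
    obtain ⟨hx0, hx1⟩ := hx
    have hqn : (x ^ 2 - a * x - b) ^ 3 < 0 :=
      Odd.pow_neg (by exact ⟨1, by ring⟩) (hq x ⟨hx0, hx1⟩)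
    have hN : 0 ≤ 2 * ((a - 1) * x ^ 3 + 3 * b * x ^ 2 - 3 * b * x + b ^ 2 + a * b) := by
      nlinarith [pow_pos (sub_pos.2 hx1) 3, pow_pos hx0 3, mul_pos hb (pow_pos (sub_pos.2 hx1) 3)]
    exact div_nonpos_of_nonneg_of_nonpos hN hqn.le
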